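/- In the bipartite matching valuation structure (OSM), valuations are monotone: for every agent i and action subsequences S, Ŝ of other agents with Ŝ ≤ S, the set of items picked under Ŝ is a subset of the set picked under S (μ(Ŝ) ⊆ μ(S)), and hence v_i(Ŝ) ≥ v_i(S). -/

import Mathlib

/-- OSM valuations are monotone. Here `μ i S` is the item picked by agent
`i` when acting right after the subsequence `S`, and `μset S` is the set of items
picked by the agents of `S` acting in order; these are characterized by the stated
hypotheses (each agent picks her minimum-rank still-available item). The conclusion:
if `Shat` is an ordered subsequence of `S` then `μset Shat ⊆ μset S` and hence
`v i Shat = w i (μ i Shat) ≥ w i (μ i S) = v i S`. -/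
theorem stmt5 {n : ℕ}
    (r : Fin n → Fin n → ℕ) (hr : ∀ i, Function.Injective (r i))
    (w : Fin n → Fin n → ℝ) (hw0 : ∀ i j, 0 ≤ w i j)
    (hwr : ∀ i j j', r i j < r i j' → w i j' ≤ w i j)
    (μ : Fin n → List (Fin n) → Fin n) (μset : List (Fin n) → Finset (Fin n))
    (hset0 : μset [] = ∅)
    (hsetS : ∀ (S : List (Fin n)) (i : Fin n), S.Nodup → i ∉ S →
        μset (S ++ [i]) = insert (μ i S) (μset S))
    (hμ : ∀ (i : Fin n) (S : List (Fin n)), S.Nodup → i ∉ S →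
        μ i S ∉ μset S ∧ ∀ j, j ∉ μset S → r i (μ i S) ≤ r i j) :
    ∀ (i : Fin n) (S Shat : List (Fin n)), S.Nodup → i ∉ S → Shat.Sublist S →
      μset Shat ⊆ μset S ∧ w i (μ i S) ≤ w i (μ i Shat) := by
  have key : ∀ (S Shat : List (Fin n)), S.Nodup → Shat.Sublist S → μset Shat ⊆ μset S := by
    intro S
    induction S using List.reverseRecOn with
    | nil =>
      intro Shat _ hsub
      simp [List.sublist_nil.mp hsub]
    | append_singleton S' a ih =>
      intro Shat hnd hsub
      have hndS' : S'.Nodup := (List.nodup_append.mp hnd).1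
      have haS' : a ∉ S' := by
        have := List.nodup_append'.mp hnd
        intro hc
        exact this.2.2 hc (by simp)
      have hS'sub : μset S' ⊆ μset (S' ++ [a]) := by
        rw [hsetS S' a hndS' haS']
        exact Finset.subset_insert _ _
      rcases List.sublist_append_iff.mp hsub with ⟨l₁, l₂, rfl, h₁, h₂⟩
      have hIH := ih l₁ hndS' h₁
      have hsub₁ : ∀ x ∈ l₁, x ∈ S' := fun x hx => h₁.subset hx
      rcases List.sublist_singleton.mp h₂ with rfl | rfl
      · simpa using hIH.trans hS'sub
      · -- Shat = l₁ ++ [a]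
        have hndl₁ : l₁.Nodup := h₁.nodup hndS'
        have hal₁ : a ∉ l₁ := fun hc => haS' (hsub₁ a hc)
        rw [hsetS l₁ a hndl₁ hal₁, hsetS S' a hndS' haS']
        intro x hx
        rcases Finset.mem_insert.mp hx with rfl | hx
        · -- x = μ a l₁ : show μ a l₁ ∈ insert (μ a S') (μset S')
          by_cases hc : μ a l₁ ∈ μset S'
          · exact Finset.mem_insert_of_mem hc
          · have h1 := (hμ a S' hndS' haS').2 _ hc
            have h2 := (hμ a l₁ hndl₁ hal₁).2 (μ a S')
              (fun hc2 => (hμ a S' hndS' haS').1 (hIH hc2))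
            have : μ a l₁ = μ a S' := hr a (le_antisymm h2 h1)
            exact this ▸ Finset.mem_insert_self _ _
        · exact Finset.mem_insert_of_mem (hIH hx)
  intro i S Shat hnd hiS hsub
  have hsubset := key S Shat hnd hsub
  have hndShat : Shat.Nodup := hsub.nodup hnd
  have hiShat : i ∉ Shat := fun hc => hiS (hsub.subset hc)
  refine ⟨hsubset, ?_⟩
  have h1 : μ i S ∉ μset Shat := fun hc => (hμ i S hnd hiS).1 (hsubset hc)
  have h2 : r i (μ i Shat) ≤ r i (μ i S) := (hμ i Shat hndShat hiShat).2 _ h1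
  rcases lt_or_eq_of_le h2 with h | h
  · exact hwr i _ _ h
  · rw [hr i h]
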